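/- For every DIME E over a finite alphabet Σ and every symbol a ∈ Σ, the set {w(a) | w ∈ L(E)} ⊆ ℕ is representable by an interval possibly with 0 added: it is of the form {n, n+1, …, m}, {n, n+1, …}, or such a set with 0 adjoined. -/

import Mathlib

set_option autoImplicit false

universe u v w

/-- An unordered word over an alphabet `σ`: a multiset over `σ`,
viewed as a function giving the number of occurrences of each symbol. -/
def UWord (σ : Type u) : Type u := σ → ℕ

/-- The empty unordered word `ε`. -/
def UWord.zero {σ : Type u} : UWord σ := fun _ => 0

/-- Unordered concatenation (multiset union) of two unordered words. -/
def UWord.add {σ : Type u} (w₁ w₂ : UWord σ) : UWord σ := fun a => w₁ a + w₂ a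

/-- The unordered word consisting of a single occurrence of `a`. -/
def UWord.single {σ : Type u} [DecidableEq σ] (a : σ) : UWord σ :=
  fun b => if b = a then 1 else 0

/-- Unordered concatenation of a list of unordered words. -/
def listSum {σ : Type u} (l : List (UWord σ)) : UWord σ := l.foldr UWord.add UWord.zero

/-- An interval multiplicity `[lo,hi]` (with `hi ∈ ℕ ∪ {∞}`), where the flag
`opt` marks the variant `[lo,hi]?` that additionally allows zero iterations. -/
structure Iv : Type where
  lo : ℕ
  hi : ℕ∞
  opt : Bool

/-- Membership of a number of iterations in the set denoted by an interval multiplicity. -/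
def Iv.Mem (I : Iv) (n : ℕ) : Prop :=
  (I.lo ≤ n ∧ (n : ℕ∞) ≤ I.hi) ∨ (I.opt = true ∧ n = 0)

/-- The multiplicity `1 = [1,1]`. -/
def Iv.one : Iv := ⟨1, 1, false⟩
/-- The multiplicity `? = [0,1]`. -/
def Iv.qmark : Iv := ⟨0, 1, false⟩
/-- The multiplicity `+ = [1,∞]`. -/
def Iv.iplus : Iv := ⟨1, ⊤, false⟩
/-- The multiplicity `* = [0,∞]`. -/
def Iv.istar : Iv := ⟨0, ⊤, false⟩

/-- An atom `(a₁^{I₁} || ⋯ || a_k^{I_k})`: a list of symbols, each with a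
multiplicity `1` (flag `true`) or `?` (flag `false`). -/
abbrev Atom (σ : Type u) : Type u := List (σ × Bool)

/-- A clause `(A₁^{I₁} | ⋯ | A_k^{I_k})`: a list of atoms with interval multiplicities. -/
abbrev Clause (σ : Type u) : Type u := List (Atom σ × Iv)

/-- A disjunctive interval multiplicity expression `(D₁^{I₁} || ⋯ || D_k^{I_k})`
(as raw syntax; well-formedness is `DIME.WF`). -/
structure DIME (σ : Type u) : Type u where
  clauses : List (Clause σ × Iv)

/-- Language of a single symbol with its multiplicity (`1` or `?`) inside an atom. -/
def atomEntryLang {σ : Type u} [DecidableEq σ] (p : σ × Bool) : Set (UWord σ) :=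
  if p.2 = true then {UWord.single p.1} else {UWord.single p.1, UWord.zero}

/-- Unordered concatenation of the languages of the items of a list. -/
def listConcLang {σ : Type u} {α : Type v} (f : α → Set (UWord σ)) :
    List α → Set (UWord σ)
  | [] => {UWord.zero}
  | x :: xs => {w | ∃ w₁ ∈ f x, ∃ w₂ ∈ listConcLang f xs, w = w₁.add w₂}

/-- The language of an atom. -/
def Atom.lang {σ : Type u} [DecidableEq σ] (A : Atom σ) : Set (UWord σ) :=
  listConcLang atomEntryLang A

/-- The language `L(E^I)` obtained by iterating a language `L` according to
an interval multiplicity `I`. -/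
def iterLang {σ : Type u} (L : Set (UWord σ)) (I : Iv) : Set (UWord σ) :=
  {w | (∃ l : List (UWord σ),
          (∀ x ∈ l, x ∈ L) ∧ I.lo ≤ l.length ∧ (l.length : ℕ∞) ≤ I.hi ∧ w = listSum l) ∨
       (I.opt = true ∧ w = UWord.zero)}

/-- The language of a clause: disjunction of its atoms with intervals. -/
def Clause.lang {σ : Type u} [DecidableEq σ] (D : Clause σ) : Set (UWord σ) :=
  {w | ∃ p ∈ D, w ∈ iterLang (Atom.lang p.1) p.2}

/-- The language of a DIME: the unordered concatenation of its clauses with intervals. -/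
def DIME.lang {σ : Type u} [DecidableEq σ] (E : DIME σ) : Set (UWord σ) :=
  listConcLang (fun p => iterLang (Clause.lang p.1) p.2) E.clauses

/-- A clause is simple if all its atoms carry multiplicity `1` or `?`. -/
def Clause.Simple {σ : Type u} (D : Clause σ) : Prop :=
  ∀ p ∈ D, p.2 = Iv.one ∨ p.2 = Iv.qmark

/-- The list of all symbol occurrences in a DIME. -/
def DIME.symbols {σ : Type u} (E : DIME σ) : List σ :=
  E.clauses.flatMap fun p => p.1.flatMap fun q => q.1.map Prod.fst

/-- Well-formedness of a DIME `(D₁^{I₁} || ⋯ || D_k^{I_k})`: each `D_i` is either a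
simple clause with `I_i ∈ {+,*}`, or a clause with `I_i ∈ {1,?}`; moreover no symbol
occurs twice in the whole expression. -/
def DIME.WF {σ : Type u} (E : DIME σ) : Prop :=
  (∀ p ∈ E.clauses,
      (Clause.Simple p.1 ∧ (p.2 = Iv.iplus ∨ p.2 = Iv.istar)) ∨
      (p.2 = Iv.one ∨ p.2 = Iv.qmark)) ∧
  E.symbols.Nodup


section Aux

variable {σ : Type u} [DecidableEq σ]

/-- The set of possible counts of symbol `a` in words of a language. -/
def Cnt (L : Set (UWord σ)) (a : σ) : Set ℕ := {k | ∃ w ∈ L, w a = k}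

/-- Representability by an interval multiplicity. -/
def RepIv (S : Set ℕ) : Prop := ∃ I : Iv, ∀ k, k ∈ S ↔ I.Mem k

lemma mem_mk {lo : ℕ} {hi : ℕ∞} {opt : Bool} {n : ℕ} :
    (Iv.mk lo hi opt).Mem n ↔ (lo ≤ n ∧ (n : ℕ∞) ≤ hi) ∨ (opt = true ∧ n = 0) :=
  Iff.rfl

lemma rep_congr {S T : Set ℕ} (h : S = T) (hT : RepIv T) : RepIv S := h ▸ hT

lemma enat_le_zero {k : ℕ} (h : (k : ℕ∞) ≤ 0) : k = 0 := by
  exact_mod_cast le_antisymm h zero_le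

lemma rep_empty : RepIv (∅ : Set ℕ) := by
  refine ⟨⟨1, 0, false⟩, fun k => ?_⟩
  simp only [Set.mem_empty_iff_false, mem_mk, false_iff]
  rintro (⟨h1, h2⟩ | ⟨h, _⟩)
  · have := enat_le_zero h2; omega
  · simp at h

lemma rep_zero : RepIv ({0} : Set ℕ) := by
  refine ⟨⟨0, 0, false⟩, fun k => ?_⟩
  simp only [Set.mem_singleton_iff, mem_mk]
  constructor
  · rintro rfl; exact Or.inl ⟨le_rfl, by simp⟩
  · rintro (⟨h1, h2⟩ | ⟨h, _⟩)
    · exact enat_le_zero h2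
    · simp at h

lemma rep_subzero {S : Set ℕ} (h : ∀ k ∈ S, k = 0) : RepIv S := by
  by_cases h0 : (0 : ℕ) ∈ S
  · have hS : S = {0} := by
      ext k
      constructor
      · intro hk; exact h k hk
      · intro hk; rw [Set.mem_singleton_iff] at hk; rw [hk]; exact h0
    rw [hS]; exact rep_zero
  · have hS : S = ∅ := by
      rw [Set.eq_empty_iff_forall_notMem]
      intro k hk
      have := h k hk; subst this; exact h0 hk
    rw [hS]; exact rep_empty

lemma rep_union_zero {S : Set ℕ} (hS : RepIv S) : RepIv (S ∪ {0}) := by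
  obtain ⟨I, hI⟩ := hS
  refine ⟨⟨I.lo, I.hi, true⟩, fun k => ?_⟩
  rw [Set.mem_union, Set.mem_singleton_iff, hI k, mem_mk]
  unfold Iv.Mem
  constructor
  · rintro ((h | ⟨_, rfl⟩) | rfl)
    · exact Or.inl h
    · exact Or.inr ⟨rfl, rfl⟩
    · exact Or.inr ⟨rfl, rfl⟩
  · rintro (h | ⟨_, rfl⟩)
    · exact Or.inl (Or.inl h)
    · exact Or.inr rfl

lemma rep_union_subzero {S T : Set ℕ} (hS : RepIv S) (hT : ∀ k ∈ T, k = 0) :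
    RepIv (S ∪ T) := by
  by_cases h0 : (0 : ℕ) ∈ T
  · have h : S ∪ T = S ∪ {0} := by
      ext k
      simp only [Set.mem_union, Set.mem_singleton_iff]
      constructor
      · rintro (hk | hk)
        · exact Or.inl hk
        · exact Or.inr (hT k hk)
      · rintro (hk | rfl)
        · exact Or.inl hk
        · exact Or.inr h0
    rw [h]; exact rep_union_zero hS
  · have h : S ∪ T = S := by
      ext k
      simp only [Set.mem_union]
      constructor
      · rintro (hk | hk)
        · exact hk
        · have := hT k hk; subst this; exact absurd hk h0
      · exact Or.inl
    rw [h]; exact hS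

lemma rep_subzero_union {S T : Set ℕ} (hS : ∀ k ∈ S, k = 0) (hT : RepIv T) :
    RepIv (S ∪ T) := by
  rw [Set.union_comm]; exact rep_union_subzero hT hS

/-- Minkowski sum of sets of naturals. -/
def Mk (S T : Set ℕ) : Set ℕ := {k | ∃ i ∈ S, ∃ j ∈ T, k = i + j}

lemma rep_mk_subzero {S T : Set ℕ} (hS : ∀ k ∈ S, k = 0) (hT : RepIv T) :
    RepIv (Mk S T) := by
  by_cases h0 : (0 : ℕ) ∈ S
  · have h : Mk S T = T := by
      ext k
      constructor
      · rintro ⟨i, hi, j, hj, rfl⟩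
        have := hS i hi; subst this; simpa using hj
      · intro hk; exact ⟨0, h0, k, hk, (zero_add k).symm⟩
    rw [h]; exact hT
  · have h : Mk S T = ∅ := by
      rw [Set.eq_empty_iff_forall_notMem]
      rintro k ⟨i, hi, j, hj, rfl⟩
      have := hS i hi; subst this; exact h0 hi
    rw [h]; exact rep_empty

lemma rep_mk_subzero' {S T : Set ℕ} (hS : RepIv S) (hT : ∀ k ∈ T, k = 0) :
    RepIv (Mk S T) := by
  have h : Mk S T = Mk T S := by
    ext k
    constructor
    · rintro ⟨i, hi, j, hj, rfl⟩; exact ⟨j, hj, i, hi, (add_comm i j)⟩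
    · rintro ⟨i, hi, j, hj, rfl⟩; exact ⟨j, hj, i, hi, (add_comm i j)⟩
  rw [h]; exact rep_mk_subzero hT hS

lemma listSum_cons (x : UWord σ) (l : List (UWord σ)) :
    listSum (x :: l) = x.add (listSum l) := rfl

lemma listSum_apply (l : List (UWord σ)) (a : σ) :
    listSum l a = (l.map (fun w => w a)).sum := by
  induction l with
  | nil => rfl
  | cons x xs ih =>
    have h : listSum (x :: xs) a = x a + listSum xs a := rfl
    rw [h, ih, List.map_cons, List.sum_cons]

lemma mem_iterLang {L : Set (UWord σ)} {I : Iv} {w : UWord σ} :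
    w ∈ iterLang L I ↔
      ∃ l : List (UWord σ), (∀ x ∈ l, x ∈ L) ∧ I.Mem l.length ∧ w = listSum l := by
  constructor
  · rintro (⟨l, hl, hl1, hl2, rfl⟩ | ⟨ho, rfl⟩)
    · exact ⟨l, hl, Or.inl ⟨hl1, hl2⟩, rfl⟩
    · exact ⟨[], by simp, Or.inr ⟨ho, rfl⟩, rfl⟩
  · rintro ⟨l, hl, (⟨hl1, hl2⟩ | ⟨ho, hlen⟩), rfl⟩
    · exact Or.inl ⟨l, hl, hl1, hl2, rfl⟩
    · have : l = [] := List.length_eq_zero_iff.1 hlen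
      subst this
      exact Or.inr ⟨ho, rfl⟩

lemma exists_list_of_counts {L : Set (UWord σ)} {a : σ} :
    ∀ ns : List ℕ, (∀ n ∈ ns, n ∈ Cnt L a) →
      ∃ l : List (UWord σ), (∀ x ∈ l, x ∈ L) ∧ l.length = ns.length ∧
        listSum l a = ns.sum := by
  intro ns
  induction ns with
  | nil => intro _; exact ⟨[], by simp, rfl, rfl⟩
  | cons n ns ih =>
    intro h
    obtain ⟨w, hw, hwa⟩ := h n (by simp)
    obtain ⟨l, hl, hlen, hsum⟩ := ih (fun m hm => h m (by simp [hm]))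
    refine ⟨w :: l, ?_, by simp [hlen], ?_⟩
    · rintro x hx
      rcases List.mem_cons.1 hx with rfl | hx
      · exact hw
      · exact hl x hx
    · have h1 : listSum (w :: l) a = w a + listSum l a := rfl
      rw [h1, hsum, hwa, List.sum_cons]

lemma cnt_iterLang {L : Set (UWord σ)} {I : Iv} {a : σ} {k : ℕ} :
    k ∈ Cnt (iterLang L I) a ↔
      ∃ ns : List ℕ, (∀ n ∈ ns, n ∈ Cnt L a) ∧ I.Mem ns.length ∧ k = ns.sum := by
  constructor
  · rintro ⟨w, hw, rfl⟩
    rw [mem_iterLang] at hw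
    obtain ⟨l, hl, hlen, rfl⟩ := hw
    refine ⟨l.map (fun w => w a), ?_, by simpa using hlen, listSum_apply l a⟩
    rintro n hn
    simp only [List.mem_map] at hn
    obtain ⟨x, hx, rfl⟩ := hn
    exact ⟨x, hl x hx, rfl⟩
  · rintro ⟨ns, hns, hlen, rfl⟩
    obtain ⟨l, hl, hlen', hsum⟩ := exists_list_of_counts ns hns
    exact ⟨listSum l, mem_iterLang.2 ⟨l, hl, by rw [hlen']; exact hlen, rfl⟩, hsum⟩

lemma single_apply (b a : σ) : UWord.single b a = if a = b then 1 else 0 := rfl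

lemma single_le_one (b a : σ) : UWord.single b a ≤ 1 := by
  rw [single_apply]; split <;> omega

lemma atomEntry_cases {p : σ × Bool} {w : UWord σ} (h : w ∈ atomEntryLang p) :
    w = UWord.single p.1 ∨ w = UWord.zero := by
  unfold atomEntryLang at h
  split at h
  · exact Or.inl h
  · rcases h with h | h
    · exact Or.inl h
    · exact Or.inr h

lemma single_mem_entry (p : σ × Bool) : UWord.single p.1 ∈ atomEntryLang p := by
  unfold atomEntryLang
  split
  · rfl
  · exact Or.inl rfl

lemma atom_nonempty (A : Atom σ) : ∃ w, w ∈ Atom.lang A := by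
  induction A with
  | nil => exact ⟨UWord.zero, rfl⟩
  | cons p A ih =>
    obtain ⟨w, hw⟩ := ih
    exact ⟨(UWord.single p.1).add w, UWord.single p.1, single_mem_entry p, w, hw, rfl⟩

lemma atom_count_zero {A : Atom σ} {a : σ} (ha : a ∉ A.map Prod.fst) :
    ∀ w ∈ Atom.lang A, w a = 0 := by
  induction A with
  | nil =>
    rintro w hw
    have h : w = UWord.zero := hw
    rw [h]; rfl
  | cons p A ih =>
    rintro w ⟨w₁, h₁, w₂, h₂, rfl⟩
    simp only [List.map_cons, List.mem_cons, not_or] at ha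
    have h1 : w₁ a = 0 := by
      rcases atomEntry_cases h₁ with rfl | rfl
      · rw [single_apply, if_neg ha.1]
      · rfl
    have h2 : w₂ a = 0 := ih (by simpa using ha.2) w₂ h₂
    show w₁ a + w₂ a = 0
    omega

lemma atom_le_one {A : Atom σ} {a : σ} (hnd : (A.map Prod.fst).Nodup) :
    ∀ w ∈ Atom.lang A, w a ≤ 1 := by
  induction A with
  | nil =>
    rintro w hw
    have h : w = UWord.zero := hw
    rw [h]; exact Nat.zero_le 1
  | cons p A ih =>
    rintro w ⟨w₁, h₁, w₂, h₂, rfl⟩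
    rw [List.map_cons, List.nodup_cons] at hnd
    show w₁ a + w₂ a ≤ 1
    by_cases hpa : a = p.1
    · have h2 : w₂ a = 0 := atom_count_zero (by rw [hpa]; exact hnd.1) w₂ h₂
      have h1 : w₁ a ≤ 1 := by
        rcases atomEntry_cases h₁ with rfl | rfl
        · exact single_le_one p.1 a
        · exact Nat.zero_le 1
      omega
    · have h1 : w₁ a = 0 := by
        rcases atomEntry_cases h₁ with rfl | rfl
        · rw [single_apply, if_neg hpa]
        · rfl
      have h2 := ih hnd.2 w₂ h₂
      omega

lemma atom_exists_one {A : Atom σ} {a : σ} (hnd : (A.map Prod.fst).Nodup)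
    (ha : a ∈ A.map Prod.fst) : ∃ w ∈ Atom.lang A, w a = 1 := by
  induction A with
  | nil => simp at ha
  | cons p A ih =>
    rw [List.map_cons, List.nodup_cons] at hnd
    by_cases hpa : a = p.1
    · obtain ⟨wn, hwn⟩ := atom_nonempty A
      refine ⟨(UWord.single p.1).add wn, ⟨UWord.single p.1, single_mem_entry p, wn, hwn, rfl⟩, ?_⟩
      have h2 : wn a = 0 := atom_count_zero (by rw [hpa]; exact hnd.1) wn hwn
      show UWord.single p.1 a + wn a = 1
      rw [single_apply, if_pos hpa, h2]
    · have ha' : a ∈ A.map Prod.fst := by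
        rw [List.map_cons, List.mem_cons] at ha
        rcases ha with h | h
        · exact absurd h hpa
        · exact h
      obtain ⟨w, hw, hw1⟩ := ih hnd.2 ha'
      refine ⟨(UWord.single p.1).add w, ⟨UWord.single p.1, single_mem_entry p, w, hw, rfl⟩, ?_⟩
      show UWord.single p.1 a + w a = 1
      rw [single_apply, if_neg hpa, hw1]

lemma atom_exists_zero {A : Atom σ} {a : σ} (hnd : (A.map Prod.fst).Nodup)
    (ha : (a, false) ∈ A) : ∃ w ∈ Atom.lang A, w a = 0 := by
  induction A with
  | nil => simp at ha
  | cons p A ih =>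
    rw [List.map_cons, List.nodup_cons] at hnd
    by_cases hpa : a = p.1
    · obtain ⟨wn, hwn⟩ := atom_nonempty A
      have h2 : wn a = 0 := atom_count_zero (by rw [hpa]; exact hnd.1) wn hwn
      have hp : p = (a, false) := by
        rcases List.mem_cons.1 ha with h | h
        · exact h.symm
        · have : a ∈ A.map Prod.fst := List.mem_map_of_mem (f := Prod.fst) h
          rw [hpa] at this
          exact absurd this hnd.1
      have hz : UWord.zero ∈ atomEntryLang p := by
        unfold atomEntryLang
        rw [hp]
        simp
      refine ⟨UWord.zero.add wn, ⟨UWord.zero, hz, wn, hwn, rfl⟩, ?_⟩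
      show UWord.zero a + wn a = 0
      rw [h2]; rfl
    · have ha' : (a, false) ∈ A := by
        rcases List.mem_cons.1 ha with h | h
        · exact absurd (by rw [← h]) hpa
        · exact h
      obtain ⟨w, hw, hw0⟩ := ih hnd.2 ha'
      refine ⟨(UWord.single p.1).add w, ⟨UWord.single p.1, single_mem_entry p, w, hw, rfl⟩, ?_⟩
      show UWord.single p.1 a + w a = 0
      rw [single_apply, if_neg hpa, hw0]

lemma iter_count_zero {L : Set (UWord σ)} {I : Iv} {a : σ}
    (h : ∀ w ∈ L, w a = 0) : ∀ w ∈ iterLang L I, w a = 0 := by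
  intro w hw
  rw [mem_iterLang] at hw
  obtain ⟨l, hl, _, rfl⟩ := hw
  rw [listSum_apply]
  apply List.sum_eq_zero
  rintro n hn
  simp only [List.mem_map] at hn
  obtain ⟨x, hx, rfl⟩ := hn
  exact h x (hl x hx)

lemma clause_count_zero {D : Clause σ} {a : σ}
    (ha : a ∉ D.flatMap (fun q => q.1.map Prod.fst)) :
    ∀ w ∈ Clause.lang D, w a = 0 := by
  rintro w ⟨p, hp, hw⟩
  refine iter_count_zero (fun w' hw' => ?_) w hw
  exact atom_count_zero (fun hmem => ha (List.mem_flatMap.2 ⟨p, hp, hmem⟩)) w' hw'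

lemma conc_count_zero {α : Type v} {f : α → Set (UWord σ)} {a : σ} :
    ∀ (cs : List α), (∀ x ∈ cs, ∀ w ∈ f x, w a = 0) →
      ∀ w ∈ listConcLang f cs, w a = 0 := by
  intro cs
  induction cs with
  | nil =>
    rintro _ w hw
    have h : w = UWord.zero := hw
    rw [h]; rfl
  | cons x xs ih =>
    rintro h w ⟨w₁, h₁, w₂, h₂, rfl⟩
    have e1 : w₁ a = 0 := h x (by simp) w₁ h₁
    have e2 : w₂ a = 0 := ih (fun y hy => h y (by simp [hy])) w₂ h₂
    show w₁ a + w₂ a = 0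
    omega

lemma cnt_conc_cons {α : Type v} {f : α → Set (UWord σ)} {x : α} {xs : List α} {a : σ} :
    Cnt (listConcLang f (x :: xs)) a = Mk (Cnt (f x) a) (Cnt (listConcLang f xs) a) := by
  ext k
  constructor
  · rintro ⟨w, ⟨w₁, h₁, w₂, h₂, rfl⟩, rfl⟩
    exact ⟨w₁ a, ⟨w₁, h₁, rfl⟩, w₂ a, ⟨w₂, h₂, rfl⟩, rfl⟩
  · rintro ⟨i, ⟨w₁, h₁, rfl⟩, j, ⟨w₂, h₂, rfl⟩, rfl⟩
    exact ⟨w₁.add w₂, ⟨w₁, h₁, w₂, h₂, rfl⟩, rfl⟩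

lemma cnt_clause_nil {a : σ} : Cnt (Clause.lang ([] : Clause σ)) a = ∅ := by
  rw [Set.eq_empty_iff_forall_notMem]
  rintro k ⟨w, ⟨q, hq, _⟩, _⟩
  exact absurd hq (List.not_mem_nil (a := q))

lemma cnt_clause_cons {p : Atom σ × Iv} {D : Clause σ} {a : σ} :
    Cnt (Clause.lang (p :: D)) a =
      Cnt (iterLang (Atom.lang p.1) p.2) a ∪ Cnt (Clause.lang D) a := by
  ext k
  constructor
  · rintro ⟨w, ⟨q, hq, hw⟩, rfl⟩
    rcases List.mem_cons.1 hq with rfl | hq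
    · exact Or.inl ⟨w, hw, rfl⟩
    · exact Or.inr ⟨w, ⟨q, hq, hw⟩, rfl⟩
  · rintro (⟨w, hw, rfl⟩ | ⟨w, ⟨q, hq, hw⟩, rfl⟩)
    · exact ⟨w, ⟨p, by simp, hw⟩, rfl⟩
    · exact ⟨w, ⟨q, by simp [hq], hw⟩, rfl⟩

lemma mem_one_iff {n : ℕ} : Iv.one.Mem n ↔ n = 1 := by
  rw [show Iv.one = Iv.mk 1 1 false from rfl, mem_mk]
  constructor
  · rintro (⟨h1, h2⟩ | ⟨h, _⟩)
    · have h2' : n ≤ 1 := by exact_mod_cast h2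
      omega
    · simp at h
  · rintro rfl
    exact Or.inl ⟨le_rfl, by exact_mod_cast le_rfl⟩

lemma mem_qmark_iff {n : ℕ} : Iv.qmark.Mem n ↔ n ≤ 1 := by
  rw [show Iv.qmark = Iv.mk 0 1 false from rfl, mem_mk]
  constructor
  · rintro (⟨h1, h2⟩ | ⟨h, _⟩)
    · exact_mod_cast h2
    · simp at h
  · intro h
    exact Or.inl ⟨Nat.zero_le n, by exact_mod_cast h⟩

lemma cnt_iter_one {L : Set (UWord σ)} {a : σ} :
    Cnt (iterLang L Iv.one) a = Cnt L a := by
  ext k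
  rw [show (k ∈ Cnt (iterLang L Iv.one) a) = _ from propext cnt_iterLang]
  constructor
  · rintro ⟨ns, hns, hlen, rfl⟩
    rw [mem_one_iff] at hlen
    obtain ⟨n, rfl⟩ := List.length_eq_one_iff.1 hlen
    simpa using hns n (by simp)
  · intro hk
    exact ⟨[k], by simpa using hk, mem_one_iff.2 rfl, by simp⟩

lemma cnt_iter_qmark {L : Set (UWord σ)} {a : σ} :
    Cnt (iterLang L Iv.qmark) a = Cnt L a ∪ {0} := by
  ext k
  rw [show (k ∈ Cnt (iterLang L Iv.qmark) a) = _ from propext cnt_iterLang]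
  constructor
  · rintro ⟨ns, hns, hlen, rfl⟩
    rw [mem_qmark_iff] at hlen
    rcases ns with _ | ⟨n, _ | ⟨m, ns⟩⟩
    · exact Or.inr rfl
    · exact Or.inl (by simpa using hns n (by simp))
    · simp at hlen
  · rintro (hk | hk)
    · exact ⟨[k], by simpa using hk, mem_qmark_iff.2 (by simp), by simp⟩
    · rw [Set.mem_singleton_iff] at hk
      exact ⟨[], by simp, mem_qmark_iff.2 (by simp), by simp [hk]⟩

lemma rep_dc (I : Iv) : RepIv {k | ∃ n, I.Mem n ∧ k ≤ n} := by
  by_cases hle : (I.lo : ℕ∞) ≤ I.hi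
  · refine ⟨⟨0, I.hi, false⟩, fun k => ?_⟩
    simp only [Set.mem_setOf_eq, mem_mk]
    constructor
    · rintro ⟨n, h, hkn⟩
      rcases h with ⟨h1, h2⟩ | ⟨_, rfl⟩
      · exact Or.inl ⟨Nat.zero_le k, le_trans (by exact_mod_cast hkn) h2⟩
      · have : k = 0 := Nat.le_zero.1 hkn
        subst this
        exact Or.inl ⟨le_rfl, le_trans (by exact_mod_cast Nat.zero_le I.lo) hle⟩
    · rintro (⟨_, h2⟩ | ⟨h, _⟩)
      · refine ⟨max k I.lo, Or.inl ⟨le_max_right _ _, ?_⟩, le_max_left _ _⟩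
        rcases le_total k I.lo with h' | h'
        · rw [max_eq_right h']; exact hle
        · rw [max_eq_left h']; exact h2
      · simp at h
  · by_cases hopt : I.opt = true
    · refine ⟨⟨0, 0, false⟩, fun k => ?_⟩
      simp only [Set.mem_setOf_eq, mem_mk]
      constructor
      · rintro ⟨n, h, hkn⟩
        rcases h with ⟨h1, h2⟩ | ⟨_, rfl⟩
        · exact absurd (le_trans (by exact_mod_cast h1) h2) hle
        · have : k = 0 := Nat.le_zero.1 hkn
          subst this
          exact Or.inl ⟨le_rfl, by exact_mod_cast le_rfl⟩
      · rintro (⟨_, h2⟩ | ⟨h, _⟩)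
        · have : k = 0 := enat_le_zero h2
          subst this
          exact ⟨0, Or.inr ⟨hopt, rfl⟩, le_rfl⟩
        · simp at h
    · refine ⟨⟨1, 0, false⟩, fun k => ?_⟩
      simp only [Set.mem_setOf_eq, mem_mk]
      constructor
      · rintro ⟨n, h, _⟩
        rcases h with ⟨h1, h2⟩ | ⟨ho, _⟩
        · exact absurd (le_trans (by exact_mod_cast h1) h2) hle
        · exact absurd ho hopt
      · rintro (⟨h1, h2⟩ | ⟨h, _⟩)
        · have := enat_le_zero h2; omega
        · simp at h

lemma sum_of_ones {ns : List ℕ} (h : ∀ n ∈ ns, n = 1) : ns.sum = ns.length := by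
  induction ns with
  | nil => rfl
  | cons n ns ih =>
    rw [List.sum_cons, List.length_cons, h n (by simp),
      ih (fun m hm => h m (by simp [hm]))]
    omega

lemma rep_iter_01 {L : Set (UWord σ)} {a : σ} (hub : ∀ w ∈ L, w a ≤ 1) (I : Iv) :
    RepIv (Cnt (iterLang L I) a) := by
  have hub' : ∀ n ∈ Cnt L a, n ≤ 1 := by
    rintro n ⟨w, hw, rfl⟩; exact hub w hw
  by_cases h1 : (1 : ℕ) ∈ Cnt L a
  · by_cases h0 : (0 : ℕ) ∈ Cnt L a
    · refine rep_congr ?_ (rep_dc I)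
      ext k
      rw [show (k ∈ Cnt (iterLang L I) a) = _ from propext cnt_iterLang]
      simp only [Set.mem_setOf_eq]
      constructor
      · rintro ⟨ns, hns, hlen, rfl⟩
        refine ⟨ns.length, hlen, ?_⟩
        calc ns.sum ≤ (ns.map (fun _ => 1)).sum :=
              List.Forall₂.sum_le_sum (by
                rw [List.forall₂_map_right_iff]
                exact List.forall₂_same.2 (fun n hn => hub' n (hns n hn)))
          _ = ns.length := by simp [List.map_const']
      · rintro ⟨n, hn, hk⟩
        refine ⟨List.replicate k 1 ++ List.replicate (n - k) 0, ?_, ?_, ?_⟩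
        · intro m hm
          rcases List.mem_append.1 hm with h | h
          · rw [List.eq_of_mem_replicate h]; exact h1
          · rw [List.eq_of_mem_replicate h]; exact h0
        · have hl : (List.replicate k 1 ++ List.replicate (n - k) 0).length = n := by
            simp only [List.length_append, List.length_replicate]
            omega
          rw [hl]; exact hn
        · simp [List.sum_append, List.sum_replicate]
    · have hone : ∀ n ∈ Cnt L a, n = 1 := by
        intro n hn
        have := hub' n hn
        rcases Nat.lt_or_ge n 1 with h | h
        · interval_cases n
          · exact absurd hn h0
        · omega
      refine ⟨I, fun k => ?_⟩
      rw [show (k ∈ Cnt (iterLang L I) a) = _ from propext cnt_iterLang]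
      constructor
      · rintro ⟨ns, hns, hlen, rfl⟩
        rw [sum_of_ones (fun n hn => hone n (hns n hn))]
        exact hlen
      · intro hk
        refine ⟨List.replicate k 1, ?_, by simpa using hk, by simp [List.sum_replicate]⟩
        intro n hn
        rw [List.eq_of_mem_replicate hn]
        exact h1
  · apply rep_subzero
    intro k hk
    rw [show (k ∈ Cnt (iterLang L I) a) = _ from propext cnt_iterLang] at hk
    obtain ⟨ns, hns, _, rfl⟩ := hk
    apply List.sum_eq_zero
    intro n hn
    have h := hub' n (hns n hn)
    rcases Nat.lt_or_ge n 1 with h' | h'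
    · omega
    · have : n = 1 := by omega
      subst this
      exact absurd (hns 1 hn) h1

lemma nodup_of_flatMap {α : Type v} {β : Type w} {f : α → List β} {l : List α}
    (h : (l.flatMap f).Nodup) {x : α} (hx : x ∈ l) : (f x).Nodup := by
  induction l with
  | nil => simp at hx
  | cons y l ih =>
    rw [List.flatMap_cons, List.nodup_append] at h
    rcases List.mem_cons.1 hx with rfl | hx
    · exact h.1
    · exact ih h.2.1 hx

lemma clause_le_one {D : Clause σ} {a : σ} (hs : Clause.Simple D)
    (hnd : (D.flatMap (fun q => q.1.map Prod.fst)).Nodup) :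
    ∀ w ∈ Clause.lang D, w a ≤ 1 := by
  rintro w ⟨p, hp, hw⟩
  have hnda : (p.1.map Prod.fst).Nodup := nodup_of_flatMap hnd hp
  rw [mem_iterLang] at hw
  obtain ⟨l, hl, hlen, rfl⟩ := hw
  have hlen1 : l.length ≤ 1 := by
    rcases hs p hp with h | h <;> rw [h] at hlen
    · rw [mem_one_iff] at hlen; omega
    · rw [mem_qmark_iff] at hlen; omega
  rcases l with _ | ⟨x, _ | ⟨y, l⟩⟩
  · exact Nat.zero_le 1
  · have h : listSum [x] a = x a := by
      show x a + UWord.zero a = x a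
      rfl
    rw [h]
    exact atom_le_one hnda x (hl x (by simp))
  · simp at hlen1

lemma rep_clause {D : Clause σ} {a : σ}
    (hnd : (D.flatMap (fun q => q.1.map Prod.fst)).Nodup) :
    RepIv (Cnt (Clause.lang D) a) := by
  induction D with
  | nil => exact rep_congr cnt_clause_nil rep_empty
  | cons p D ih =>
    rw [List.flatMap_cons, List.nodup_append] at hnd
    obtain ⟨hd1, hd2, hdisj⟩ := hnd
    rw [cnt_clause_cons]
    by_cases ha : a ∈ p.1.map Prod.fst
    · refine rep_union_subzero (rep_iter_01 (atom_le_one hd1) p.2) ?_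
      rintro k ⟨w, hw, rfl⟩
      exact clause_count_zero (fun hmem => hdisj a ha a hmem rfl) w hw
    · refine rep_subzero_union ?_ (ih hd2)
      rintro k ⟨w, hw, rfl⟩
      exact iter_count_zero (atom_count_zero ha) w hw

lemma rep_iterClause {D : Clause σ} {J : Iv} {a : σ}
    (hwf : (Clause.Simple D ∧ (J = Iv.iplus ∨ J = Iv.istar)) ∨ (J = Iv.one ∨ J = Iv.qmark))
    (hnd : (D.flatMap (fun q => q.1.map Prod.fst)).Nodup) :
    RepIv (Cnt (iterLang (Clause.lang D) J) a) := by
  rcases hwf with ⟨hs, _⟩ | (rfl | rfl)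
  · exact rep_iter_01 (clause_le_one hs hnd) J
  · exact rep_congr cnt_iter_one (rep_clause hnd)
  · exact rep_congr cnt_iter_qmark (rep_union_zero (rep_clause hnd))

lemma rep_dime_list {a : σ} :
    ∀ cs : List (Clause σ × Iv),
      (∀ p ∈ cs,
        (Clause.Simple p.1 ∧ (p.2 = Iv.iplus ∨ p.2 = Iv.istar)) ∨
        (p.2 = Iv.one ∨ p.2 = Iv.qmark)) →
      (cs.flatMap fun p => p.1.flatMap fun q => q.1.map Prod.fst).Nodup →
      RepIv (Cnt (listConcLang (fun p => iterLang (Clause.lang p.1) p.2) cs) a) := by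
  intro cs
  induction cs with
  | nil =>
    intro _ _
    refine rep_congr ?_ rep_zero
    ext k
    constructor
    · rintro ⟨w, hw, rfl⟩
      have h : w = UWord.zero := hw
      rw [h]
      rfl
    · intro hk
      rw [Set.mem_singleton_iff] at hk
      exact ⟨UWord.zero, rfl, hk.symm⟩
  | cons p cs ih =>
    intro hwf hnd
    rw [List.flatMap_cons, List.nodup_append] at hnd
    obtain ⟨hd1, hd2, hdisj⟩ := hnd
    rw [cnt_conc_cons]
    by_cases ha : a ∈ p.1.flatMap fun q => q.1.map Prod.fst
    · refine rep_mk_subzero' (rep_iterClause (hwf p (by simp)) hd1) ?_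
      rintro k ⟨w, hw, rfl⟩
      refine conc_count_zero cs ?_ w hw
      intro x hx w' hw'
      refine iter_count_zero (clause_count_zero ?_) w' hw'
      intro hmem
      exact hdisj a ha a (List.mem_flatMap.2 ⟨x, hx, hmem⟩) rfl
    · refine rep_mk_subzero ?_ (ih (fun q hq => hwf q (by simp [hq])) hd2)
      rintro k ⟨w, hw, rfl⟩
      exact iter_count_zero (clause_count_zero ha) w hw

end Aux

/-- For every DIME `E` over a finite alphabet `σ` and every symbol
`a ∈ σ`, the set `{w(a) | w ∈ L(E)} ⊆ ℕ` is representable by an interval possibly with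
`0` added: it is of the form `{n,…,m}`, `{n, n+1, …}`, or such a set with `0` adjoined. -/
theorem statement1 {σ : Type} [DecidableEq σ] [Fintype σ]
    (E : DIME σ) (hE : E.WF) (a : σ) :
    ∃ I : Iv, ∀ k : ℕ, (∃ w ∈ DIME.lang E, w a = k) ↔ I.Mem k := by
  obtain ⟨hwf, hnd⟩ := hE
  obtain ⟨I, hI⟩ := rep_dime_list (a := a) E.clauses hwf hnd
  exact ⟨I, fun k => hI k⟩
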